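/- Let X be a connected topological space, x a point of X, and C a connected component of X \ {x}. Then X \ C is connected, and the closure of C in X equals either C or C ∪ {x}. -/
import Mathlib

open Set

private lemma aux16 {X : Type*} [TopologicalSpace X] [ConnectedSpace X]
    (x y : X) (hy : y ∈ ({x}ᶜ : Set X)) {u v : Set X} (hu : IsOpen u) (hv : IsOpen v)
    (hcov : (connectedComponentIn ({x}ᶜ : Set X) y)ᶜ ⊆ u ∪ v)
    (hemp : (connectedComponentIn ({x}ᶜ : Set X) y)ᶜ ∩ (u ∩ v) = ∅)
    (hxu : x ∈ u)
    (hb : ((connectedComponentIn ({x}ᶜ : Set X) y)ᶜ ∩ v).Nonempty) : False := by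
  set C := connectedComponentIn ({x}ᶜ : Set X) y with hC
  set B := Cᶜ ∩ v with hBdef
  have hxB : x ∉ B := fun hxB =>
    (eq_empty_iff_forall_notMem.mp hemp x) ⟨hxB.1, hxu, hxB.2⟩
  have hBx : B ⊆ ({x}ᶜ : Set X) := fun z hz hzx => hxB (mem_singleton_iff.mp hzx ▸ hz)
  have hpre : IsPreconnected (C ∪ B) := by
    rw [isPreconnected_iff_subset_of_disjoint]
    intro u' v' hu' hv' hcov' hdisj'
    have hCpre : IsPreconnected C := isPreconnected_connectedComponentIn
    rcases isPreconnected_iff_subset_of_disjoint.mp hCpre u' v' hu' hv'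
        (fun z hz => hcov' (Or.inl hz))
        (eq_empty_iff_forall_notMem.mpr fun z hz =>
          eq_empty_iff_forall_notMem.mp hdisj' z ⟨Or.inl hz.1, hz.2⟩) with hCu' | hCv'
    · left
      refine union_subset hCu' ?_
      by_contra hBu'
      obtain ⟨z, hzB, hzu'⟩ := not_subset.mp hBu'
      have hzv' : z ∈ v' := (hcov' (Or.inr hzB)).resolve_left hzu'
      obtain ⟨w, -, hw1, hw2⟩ := isPreconnected_univ (u ∪ u') (v ∩ v')
        (hu.union hu') (hv.inter hv')
        (fun w _ => by
          by_cases hwC : w ∈ C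
          · exact Or.inl (Or.inr (hCu' hwC))
          · rcases hcov hwC with hwu | hwv
            · exact Or.inl (Or.inl hwu)
            · rcases hcov' (Or.inr ⟨hwC, hwv⟩) with hwu' | hwv'
              · exact Or.inl (Or.inr hwu')
              · exact Or.inr ⟨hwv, hwv'⟩)
        ⟨x, mem_univ x, Or.inl hxu⟩
        ⟨z, mem_univ z, hzB.2, hzv'⟩
      by_cases hwC : w ∈ C
      · exact eq_empty_iff_forall_notMem.mp hdisj' w ⟨Or.inl hwC, hCu' hwC, hw2.2⟩
      · rcases hw1 with hwu | hwu'
        · exact eq_empty_iff_forall_notMem.mp hemp w ⟨hwC, hwu, hw2.1⟩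
        · exact eq_empty_iff_forall_notMem.mp hdisj' w ⟨Or.inr ⟨hwC, hw2.1⟩, hwu', hw2.2⟩
    · right
      refine union_subset hCv' ?_
      by_contra hBv'
      obtain ⟨z, hzB, hzv'⟩ := not_subset.mp hBv'
      have hzu' : z ∈ u' := (hcov' (Or.inr hzB)).resolve_right hzv'
      obtain ⟨w, -, hw1, hw2⟩ := isPreconnected_univ (u ∪ v') (v ∩ u')
        (hu.union hv') (hv.inter hu')
        (fun w _ => by
          by_cases hwC : w ∈ C
          · exact Or.inl (Or.inr (hCv' hwC))
          · rcases hcov hwC with hwu | hwv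
            · exact Or.inl (Or.inl hwu)
            · rcases hcov' (Or.inr ⟨hwC, hwv⟩) with hwu' | hwv'
              · exact Or.inr ⟨hwv, hwu'⟩
              · exact Or.inl (Or.inr hwv'))
        ⟨x, mem_univ x, Or.inl hxu⟩
        ⟨z, mem_univ z, hzB.2, hzu'⟩
      by_cases hwC : w ∈ C
      · exact eq_empty_iff_forall_notMem.mp hdisj' w ⟨Or.inl hwC, hw2.2, hCv' hwC⟩
      · rcases hw1 with hwu | hwv'
        · exact eq_empty_iff_forall_notMem.mp hemp w ⟨hwC, hwu, hw2.1⟩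
        · exact eq_empty_iff_forall_notMem.mp hdisj' w ⟨Or.inr ⟨hwC, hw2.1⟩, hw2.2, hwv'⟩
  have hsub : C ∪ B ⊆ C :=
    hpre.subset_connectedComponentIn (Or.inl (mem_connectedComponentIn hy))
      (union_subset (connectedComponentIn_subset _ _) hBx)
  obtain ⟨b, hbB⟩ := hb
  exact hbB.1 (hsub (Or.inr hbB))

/-- Let `X` be a connected space, `x ∈ X`, and `C` a connected component of `X \ {x}`.
Then `X \ C` is connected, and the closure of `C` equals `C` or `C ∪ {x}`. -/
theorem stmt_16 {X : Type*} [TopologicalSpace X] [ConnectedSpace X]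
    (x y : X) (hy : y ≠ x) :
    IsConnected ((connectedComponentIn ({x}ᶜ : Set X) y)ᶜ : Set X) ∧
      (closure (connectedComponentIn ({x}ᶜ : Set X) y) =
          connectedComponentIn ({x}ᶜ : Set X) y ∨
        closure (connectedComponentIn ({x}ᶜ : Set X) y) =
          connectedComponentIn ({x}ᶜ : Set X) y ∪ {x}) := by
  have hy' : y ∈ ({x}ᶜ : Set X) := fun h => hy (mem_singleton_iff.mp h)
  set C := connectedComponentIn ({x}ᶜ : Set X) y with hCdef
  have hxC : x ∉ C := fun h => (connectedComponentIn_subset _ _ h) rfl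
  -- key: points of the closure of C other than x are in C
  have key : ∀ z : X, z ∈ closure C → z ≠ x → z ∈ C := by
    intro z hz hzx
    have hz' : z ∈ ({x}ᶜ : Set X) := fun h => hzx (mem_singleton_iff.mp h)
    have himg : C = (↑) '' connectedComponent (⟨y, hy'⟩ : ({x}ᶜ : Set X)) :=
      connectedComponentIn_eq_image hy'
    have hq : (⟨z, hz'⟩ : ({x}ᶜ : Set X)) ∈
        closure (connectedComponent (⟨y, hy'⟩ : ({x}ᶜ : Set X))) := by
      rw [closure_subtype]
      rwa [himg] at hz
    have := isClosed_connectedComponent.closure_subset hq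
    rw [himg]
    exact ⟨⟨z, hz'⟩, this, rfl⟩
  refine ⟨⟨⟨x, hxC⟩, ?_⟩, ?_⟩
  · -- preconnectedness of Cᶜ
    intro u v hu hv hcov hau hbv
    by_contra hne
    rw [not_nonempty_iff_eq_empty] at hne
    rcases hcov hxC with hxu | hxv
    · exact absurd (aux16 x y hy' hu hv hcov hne hxu hbv) not_false
    · refine absurd (aux16 x y hy' hv hu ?_ ?_ hxv hau) not_false
      · rwa [union_comm]
      · rwa [inter_comm v u]
  · by_cases hx : x ∈ closure C
    · right
      refine subset_antisymm (fun z hz => ?_) (union_subset subset_closure ?_)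
      · by_cases hzx : z = x
        · exact Or.inr (hzx ▸ rfl)
        · exact Or.inl (key z hz hzx)
      · exact singleton_subset_iff.mpr hx
    · left
      exact subset_antisymm (fun z hz => key z hz fun h => hx (h ▸ hz)) subset_closure
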